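/- Let X be a compact metric space and r : X → X continuous, surjective, finite-to-one. If W ∈ C(X), W ≥ 0, R_W 1 = 1, and there exist no W-cycles, then every Borel probability measure ν with ν(R_W f) = ν(f) for all f ∈ C(X) has no atoms, i.e. ν({x}) = 0 for every x ∈ X. -/

import Mathlib

open MeasureTheory Filter Topology

/-- The Ruelle transfer operator `R_W f (x) = ∑_{y ∈ r⁻¹(x)} W(y) f(y)`. -/
noncomputable def RuelleOp {X : Type*} (r : X → X) (W : X → ℝ) (f : X → ℝ) (x : X) : ℝ :=
  ∑ᶠ y ∈ r ⁻¹' {x}, W y * f y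

/-- `C` is an `n`-cycle for `r` (for some `n ≥ 1`, the minimal period):
`C = {x, r x, …, r^[n-1] x}` with `r^[n] x = x`. -/
def IsCycle {X : Type*} (r : X → X) (C : Set X) : Prop :=
  ∃ (x : X) (n : ℕ), 0 < n ∧ r^[n] x = x ∧
    (∀ m : ℕ, 0 < m → r^[m] x = x → n ≤ m) ∧
    C = (fun k => r^[k] x) '' Set.Iio n

/-- A `W`-cycle: a cycle on which `W` is identically `1`. -/
def IsWCycle {X : Type*} (r : X → X) (W : X → ℝ) (C : Set X) : Prop :=
  IsCycle r C ∧ ∀ y ∈ C, W y = 1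

lemma ruelleOp_eq_sum {X : Type*} (r : X → X) (W f : X → ℝ) (x : X)
    (hfin : (r ⁻¹' {x}).Finite) :
    RuelleOp r W f x = ∑ y ∈ hfin.toFinset, W y * f y := by
  rw [RuelleOp, ← finsum_mem_coe_finset, Set.Finite.coe_toFinset]

lemma key_ineq {X : Type*} [MetricSpace X] [CompactSpace X] [MeasurableSpace X] [BorelSpace X]
    (r : X → X) (hr_cont : Continuous r) (hr_fin : ∀ x : X, (r ⁻¹' {x}).Finite)
    (W : X → ℝ) (hW_nonneg : ∀ x, 0 ≤ W x)
    (hW1 : ∀ x : X, (∑ᶠ y ∈ r ⁻¹' {x}, W y) = 1)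
    (ν : Measure X) [IsProbabilityMeasure ν]
    (hν_inv : ∀ f : X → ℝ, Continuous f →
      (∫ x, RuelleOp r W f x ∂ν) = ∫ x, f x ∂ν)
    (y : X) : (ν {y}).toReal ≤ W y * (ν {r y}).toReal := by
  classical
  -- bump functions
  set f : ℕ → X → ℝ := fun n z => max 0 (1 - ((n : ℝ) + 1) * dist z y) with hf
  have hfcont : ∀ n, Continuous (f n) := by
    intro n
    exact continuous_const.max (by fun_prop)
  have hf0 : ∀ n z, 0 ≤ f n z := fun n z => le_max_left _ _
  have hf1 : ∀ n z, f n z ≤ 1 := by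
    intro n z
    apply max_le zero_le_one
    have : 0 ≤ ((n : ℝ) + 1) * dist z y := by positivity
    linarith
  have hfy : ∀ n, f n y = 1 := by
    intro n; simp [hf]
  have hfz : ∀ (n : ℕ) (z : X), (1 : ℝ) / ((n : ℝ) + 1) ≤ dist z y → f n z = 0 := by
    intro n z hz
    have hn : (0:ℝ) < (n:ℝ) + 1 := by positivity
    have : 1 ≤ ((n : ℝ) + 1) * dist z y := by
      rw [div_le_iff₀ hn] at hz; linarith [hz]
    simp only [hf]
    rw [max_eq_left]; linarith
  have hfz' : ∀ n z, f n z ≠ 0 → dist z y < 1 / (n + 1) := by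
    intro n z hz
    by_contra h
    exact hz (hfz n z (le_of_not_gt h))
  -- the bad sets
  set B : ℕ → Set X := fun n => r '' (Metric.closedBall y (1 / (n + 1)) \ {y}) with hB
  have hBmeas : ∀ n, MeasurableSet (B n) := by
    intro n
    have hEq : B n = ⋃ m : ℕ, r '' (Metric.closedBall y (1 / (n + 1)) \ Metric.ball y (1 / (m + 1))) := by
      ext x
      simp only [Set.mem_iUnion, Set.mem_image, hB]
      constructor
      · rintro ⟨z, ⟨hz1, hz2⟩, rfl⟩
        have hd : 0 < dist z y := dist_pos.2 hz2
        obtain ⟨m, hm⟩ := exists_nat_one_div_lt hd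
        exact ⟨m, z, ⟨hz1, fun h => absurd (Metric.mem_ball.1 h) (not_lt.2 hm.le)⟩, rfl⟩
      · rintro ⟨m, z, ⟨hz1, hz2⟩, rfl⟩
        refine ⟨z, ⟨hz1, ?_⟩, rfl⟩
        intro h
        apply hz2
        rw [Set.mem_singleton_iff] at h
        subst h
        refine Metric.mem_ball.2 ?_
        rw [dist_self]
        positivity
    rw [hEq]
    refine MeasurableSet.iUnion fun m => ?_
    have hc : IsCompact (Metric.closedBall y (1 / (n + 1)) \ Metric.ball y (1 / (m + 1))) :=
      (Metric.isClosed_closedBall.sdiff Metric.isOpen_ball).isCompact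
    exact ((hc.image hr_cont).isClosed).measurableSet
  have hBanti : Antitone B := by
    intro a b hab
    apply Set.image_mono
    apply Set.diff_subset_diff_left
    apply Metric.closedBall_subset_closedBall
    apply one_div_le_one_div_of_le (by positivity)
    have : (a:ℝ) ≤ (b:ℝ) := Nat.cast_le.2 hab
    linarith
  have hBempty : (⋂ n, B n) = ∅ := by
    by_contra h
    obtain ⟨x, hx⟩ := Set.nonempty_iff_ne_empty.2 h
    simp only [Set.mem_iInter] at hx
    -- choose witnesses
    choose z hz1 hz2 using fun n => hx n
    obtain ⟨hz1', hz1''⟩ : (∀ n, dist (z n) y ≤ 1 / (n + 1)) ∧ ∀ n, z n ≠ y := by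
      constructor
      · intro n; exact Metric.mem_closedBall.1 (hz1 n).1
      · intro n; exact (hz1 n).2
    -- all z n lie in the finite fiber of x, minus y
    set s : Finset X := (hr_fin x).toFinset.erase y with hs
    have hzs : ∀ n, z n ∈ s := by
      intro n
      refine Finset.mem_erase.2 ⟨hz1'' n, ?_⟩
      rw [Set.Finite.mem_toFinset]
      exact hz2 n
    have hsne : s.Nonempty := ⟨z 0, hzs 0⟩
    set δ : ℝ := s.inf' hsne (fun w => dist w y) with hδ
    have hδpos : 0 < δ := by
      rw [hδ, Finset.lt_inf'_iff]
      intro w hw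
      exact dist_pos.2 (Finset.ne_of_mem_erase hw)
    obtain ⟨m, hm⟩ := exists_nat_one_div_lt hδpos
    have h1 : δ ≤ dist (z m) y := Finset.inf'_le _ (hzs m)
    have h2 : dist (z m) y ≤ 1 / (m + 1) := hz1' m
    linarith
  have hBto : Tendsto (fun n => (ν (B n)).toReal) atTop (𝓝 0) := by
    have h1 : Tendsto (ν ∘ B) atTop (𝓝 (ν (⋂ n, B n))) :=
      tendsto_measure_iInter_atTop (fun n => (hBmeas n).nullMeasurableSet) hBanti
        ⟨0, measure_ne_top _ _⟩
    rw [hBempty, measure_empty] at h1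
    have := (ENNReal.tendsto_toReal (by simp)).comp h1
    exact this
  -- the integrals
  set I : ℕ → ℝ := fun n => ∫ z, f n z ∂ν with hI
  have hIneq : ∀ n, I n = ∫ x, RuelleOp r W (f n) x ∂ν := fun n => (hν_inv (f n) (hfcont n)).symm
  have hItendsto : Tendsto I atTop (𝓝 ((ν {y}).toReal)) := by
    have h0 : ∫ z, Set.indicator {y} (fun _ => (1:ℝ)) z ∂ν = (ν {y}).toReal := by
      rw [integral_indicator_const (1:ℝ) (measurableSet_singleton y)]
      simp [Measure.real]
    rw [← h0]
    apply tendsto_integral_of_dominated_convergence (fun _ => (1:ℝ))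
      (fun n => (hfcont n).aestronglyMeasurable) (integrable_const 1)
    · intro n
      filter_upwards with z
      rw [Real.norm_eq_abs, abs_of_nonneg (hf0 n z)]
      exact hf1 n z
    · filter_upwards with z
      by_cases hz : z = y
      · subst hz
        simp only [Set.indicator_of_mem (Set.mem_singleton z)]
        simp only [hfy]
        exact tendsto_const_nhds
      · rw [Set.indicator_of_notMem (by simpa using hz)]
        have hd : 0 < dist z y := dist_pos.2 hz
        obtain ⟨m, hm⟩ := exists_nat_one_div_lt hd
        apply tendsto_atTop_of_eventually_const (i₀ := m)
        intro n hn
        apply hfz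
        calc (1:ℝ) / (n + 1) ≤ 1 / (m + 1) := by
              apply one_div_le_one_div_of_le (by positivity)
              exact_mod_cast by linarith [(Nat.cast_le (α := ℝ)).2 hn]
          _ ≤ dist z y := hm.le
  -- per-n upper bound
  have hIle : ∀ n, I n ≤ W y * (ν {r y}).toReal + (ν (B n)).toReal := by
    intro n
    rw [hIneq n]
    by_cases hmeas : AEStronglyMeasurable (RuelleOp r W (f n)) ν
    · -- pointwise bound
      set G : X → ℝ := fun x => Set.indicator {r y} (fun _ => W y) x
          + Set.indicator (B n) (fun _ => (1:ℝ)) x with hG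
      have hle : ∀ x, RuelleOp r W (f n) x ≤ G x := by
        intro x
        rw [ruelleOp_eq_sum r W (f n) x (hr_fin x)]
        classical
        set s := (hr_fin x).toFinset with hsdef
        rw [← Finset.sum_filter_add_sum_filter_not s (fun z => z = y)]
        have hWsum : ∑ z ∈ s, W z = 1 := by
          rw [← hW1 x, ← finsum_mem_coe_finset, Set.Finite.coe_toFinset]
        apply add_le_add
        · -- part z = y
          have : ∑ z ∈ s.filter (fun z => z = y), W z * f n z
              = if y ∈ s then W y * f n y else 0 := by
            rw [Finset.sum_filter]
            exact Finset.sum_ite_eq' s y (fun z => W z * f n z)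
          rw [this]
          by_cases hy : y ∈ s
          · rw [if_pos hy, hfy, mul_one]
            have hxy : r y = x := by
              have := (Set.Finite.mem_toFinset _).1 hy
              simpa using this
            rw [Set.indicator_of_mem (by simp [hxy.symm]) (fun _ => W y)]
          · rw [if_neg hy]
            exact Set.indicator_nonneg (fun _ _ => hW_nonneg y) x
        · -- part z ≠ y
          by_cases hxB : x ∈ B n
          · rw [Set.indicator_of_mem hxB]
            calc ∑ z ∈ s.filter (fun z => ¬ z = y), W z * f n z
                ≤ ∑ z ∈ s.filter (fun z => ¬ z = y), W z := by
                  apply Finset.sum_le_sum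
                  intro z _
                  exact mul_le_of_le_one_right (hW_nonneg z) (hf1 n z)
              _ ≤ ∑ z ∈ s, W z := by
                  apply Finset.sum_le_sum_of_subset_of_nonneg (Finset.filter_subset _ _)
                  intro z _ _; exact hW_nonneg z
              _ = 1 := hWsum
          · rw [Set.indicator_of_notMem hxB]
            apply le_of_eq
            apply Finset.sum_eq_zero
            intro z hz
            rw [Finset.mem_filter] at hz
            obtain ⟨hz1, hz2⟩ := hz
            have hrz : r z = x := by
              have := (Set.Finite.mem_toFinset _).1 hz1
              simpa using this
            by_contra hne
            have hfne : f n z ≠ 0 := by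
              intro h; apply hne; rw [h, mul_zero]
            have hd := hfz' n z hfne
            exact hxB ⟨z, ⟨Metric.mem_closedBall.2 hd.le, hz2⟩, hrz⟩
      have hRnonneg : ∀ x, 0 ≤ RuelleOp r W (f n) x := by
        intro x
        rw [ruelleOp_eq_sum r W (f n) x (hr_fin x)]
        exact Finset.sum_nonneg fun z _ => mul_nonneg (hW_nonneg z) (hf0 n z)
      have hGint : Integrable G ν := by
        apply Integrable.add
        · exact (integrable_const (W y)).indicator (measurableSet_singleton (r y))
        · exact (integrable_const (1:ℝ)).indicator (hBmeas n)
      have hRint : Integrable (RuelleOp r W (f n)) ν := by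
        apply Integrable.mono' hGint hmeas
        filter_upwards with x
        rw [Real.norm_eq_abs, abs_of_nonneg (hRnonneg x)]
        exact hle x
      calc ∫ x, RuelleOp r W (f n) x ∂ν ≤ ∫ x, G x ∂ν := integral_mono hRint hGint hle
        _ = W y * (ν {r y}).toReal + (ν (B n)).toReal := by
            rw [hG, integral_add
              ((integrable_const (W y)).indicator (measurableSet_singleton (r y)))
              ((integrable_const (1:ℝ)).indicator (hBmeas n)),
              integral_indicator_const _ (measurableSet_singleton (r y)),
              integral_indicator_const _ (hBmeas n)]
            simp [mul_comm, Measure.real]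
    · rw [integral_undef (fun h => hmeas h.aestronglyMeasurable)]
      exact add_nonneg (mul_nonneg (hW_nonneg y) ENNReal.toReal_nonneg) ENNReal.toReal_nonneg
  -- conclude
  have h1 : Tendsto (fun n => I n - (ν (B n)).toReal) atTop (𝓝 ((ν {y}).toReal - 0)) :=
    hItendsto.sub hBto
  rw [sub_zero] at h1
  apply le_of_tendsto h1
  filter_upwards with n
  linarith [hIle n]

theorem stmt6
    {X : Type*} [MetricSpace X] [CompactSpace X] [MeasurableSpace X] [BorelSpace X]
    (r : X → X) (hr_cont : Continuous r) (hr_surj : Function.Surjective r)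
    (hr_fin : ∀ x : X, (r ⁻¹' {x}).Finite)
    (W : X → ℝ) (hW_cont : Continuous W) (hW_nonneg : ∀ x, 0 ≤ W x)
    (hW1 : ∀ x : X, (∑ᶠ y ∈ r ⁻¹' {x}, W y) = 1)
    -- there are no `W`-cycles
    (hnoWcycle : ¬∃ C : Set X, IsWCycle r W C)
    (ν : Measure X) [IsProbabilityMeasure ν]
    (hν_inv : ∀ f : X → ℝ, Continuous f →
      (∫ x, RuelleOp r W f x ∂ν) = ∫ x, f x ∂ν) :
    ∀ x : X, ν {x} = 0 := by
  intro x₀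
  by_contra hx₀
  have key : ∀ y, (ν {y}).toReal ≤ W y * (ν {r y}).toReal :=
    key_ineq r hr_cont hr_fin W hW_nonneg hW1 ν hν_inv
  -- W ≤ 1 everywhere
  have hW_le1 : ∀ z, W z ≤ 1 := by
    intro z
    classical
    have hfin := hr_fin (r z)
    have hzmem : z ∈ hfin.toFinset := by
      rw [Set.Finite.mem_toFinset]; exact rfl
    have hsum : ∑ w ∈ hfin.toFinset, W w = 1 := by
      rw [← hW1 (r z), ← finsum_mem_coe_finset, Set.Finite.coe_toFinset]
    calc W z ≤ ∑ w ∈ hfin.toFinset, W w :=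
          Finset.single_le_sum (fun w _ => hW_nonneg w) hzmem
      _ = 1 := hsum
  -- the orbit
  set orb : ℕ → X := fun k => r^[k] x₀ with horbdef
  have horb : ∀ k, orb (k + 1) = r (orb k) := fun k => Function.iterate_succ_apply' r k x₀
  set u : ℕ → ℝ := fun k => (ν {orb k}).toReal with hudef
  have humono : Monotone u := by
    apply monotone_nat_of_le_succ
    intro k
    calc u k ≤ W (orb k) * (ν {r (orb k)}).toReal := key (orb k)
      _ ≤ 1 * (ν {r (orb k)}).toReal :=
          mul_le_mul_of_nonneg_right (hW_le1 _) ENNReal.toReal_nonneg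
      _ = u (k + 1) := by simp only [one_mul, hudef, horb k]
  have hu0 : 0 < u 0 := by
    rw [hudef]
    simp only [horbdef, Function.iterate_zero_apply]
    exact ENNReal.toReal_pos hx₀ (measure_ne_top ν _)
  have hupos : ∀ k, 0 < u k := fun k => lt_of_lt_of_le hu0 (humono (Nat.zero_le k))
  -- finitely many atoms of mass ≥ ν {x₀}
  have hfin : {z : X | ν {x₀} ≤ ν {z}}.Finite := by
    apply Measure.finite_const_le_meas_of_disjoint_iUnion ν
      (ε := ν {x₀}) (pos_iff_ne_zero.2 hx₀) (As := fun z : X => {z})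
      (fun z => measurableSet_singleton z)
      (fun a b hab => by simpa using hab)
    have : (⋃ z : X, {z} : Set X) = Set.univ := by ext w; simp
    rw [this]
    exact measure_ne_top ν _
  have horbmem : ∀ k, orb k ∈ {z : X | ν {x₀} ≤ ν {z}} := by
    intro k
    have h1 : u 0 ≤ u k := humono (Nat.zero_le k)
    have h2 : orb 0 = x₀ := Function.iterate_zero_apply r x₀
    rw [hudef] at h1
    simp only [h2] at h1
    exact (ENNReal.toReal_le_toReal (measure_ne_top ν _) (measure_ne_top ν _)).1 h1
  -- pigeonhole: orbit revisits
  have := hfin.to_subtype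
  obtain ⟨a, b, hab, heq⟩ := Finite.exists_ne_map_eq_of_infinite
    (fun k : ℕ => (⟨orb k, horbmem k⟩ : {z : X | ν {x₀} ≤ ν {z}}))
  have heq' : orb a = orb b := congrArg Subtype.val heq
  -- wlog a < b
  obtain ⟨i, j, hij, hijeq⟩ : ∃ i j, i < j ∧ orb i = orb j := by
    rcases lt_or_gt_of_ne hab with h | h
    · exact ⟨a, b, h, heq'⟩
    · exact ⟨b, a, h, heq'.symm⟩
  -- u is constant on [i, j]
  have hconst : ∀ k, i ≤ k → k ≤ j → u k = u i := by
    intro k h1 h2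
    have huj : u j = u i := by rw [hudef]; simp [hijeq]
    exact le_antisymm (huj ▸ humono h2) (humono h1)
  -- W = 1 on the orbit between i and j
  have hWone : ∀ k, i ≤ k → k < j → W (orb k) = 1 := by
    intro k h1 h2
    refine le_antisymm (hW_le1 _) ?_
    have hkey : u k ≤ W (orb k) * u (k + 1) := by
      have := key (orb k)
      rwa [← horb k] at this
    rw [hconst k h1 h2.le, hconst (k + 1) (le_trans h1 (Nat.le_succ k)) h2] at hkey
    exact (le_mul_iff_one_le_left (lt_of_lt_of_le hu0 (humono (Nat.zero_le i)))).1 hkey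
  -- build the W-cycle
  set z := orb i with hzdef
  set p := j - i with hpdef
  have hp : 0 < p := Nat.sub_pos_of_lt hij
  have hzp : r^[p] z = z := by
    show r^[p] (r^[i] x₀) = orb i
    rw [← Function.iterate_add_apply]
    have hpij : p + i = j := Nat.sub_add_cancel hij.le
    rw [hpij]
    exact hijeq.symm
  have hex : ∃ m, 0 < m ∧ r^[m] z = z := ⟨p, hp, hzp⟩
  classical
  set n := Nat.find hex with hndef
  obtain ⟨hn_pos, hn_fix⟩ := Nat.find_spec hex
  have hn_min : ∀ m : ℕ, 0 < m → r^[m] z = z → n ≤ m := fun m h1 h2 =>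
    Nat.find_min' hex ⟨h1, h2⟩
  have hnp : n ≤ p := hn_min p hp hzp
  apply hnoWcycle
  refine ⟨(fun k => r^[k] z) '' Set.Iio n, ⟨z, n, hn_pos, hn_fix, hn_min, rfl⟩, ?_⟩
  rintro w ⟨k, hk, rfl⟩
  have hk' : k < n := hk
  have hw : r^[k] z = orb (k + i) := by
    show r^[k] (r^[i] x₀) = r^[k + i] x₀
    rw [← Function.iterate_add_apply]
  show W (r^[k] z) = 1
  rw [hw]
  apply hWone
  · exact Nat.le_add_left i k
  · have : k < p := lt_of_lt_of_le hk' hnp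
    omega
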